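/- Let δ > 0 and set α = δ/(4+δ). Let a, b, c be real numbers with |a + b − 2| ≤ δ/2, |c| ≤ α(a + b), and |b − 1| ≥ δ. Then |a − b + c| ≥ δ. -/
import Mathlib


/-- second ellipticity estimate from the Appendix: with `α = δ/(4+δ)`, if
`|a + b − 2| ≤ δ/2`, `|c| ≤ α(a+b)` and `|b − 1| ≥ δ`, then `|a − b + c| ≥ δ`. -/
theorem stmt4 (δ a b c : ℝ) (hδ : 0 < δ)
    (h1 : |a + b - 2| ≤ δ / 2) (h2 : |c| ≤ δ / (4 + δ) * (a + b)) (h3 : δ ≤ |b - 1|) :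
    δ ≤ |a - b + c| := by
  obtain ⟨h1a, h1b⟩ := abs_le.mp h1
  have hpos : (0:ℝ) < 4 + δ := by linarith
  have hc : |c| ≤ δ / 2 := by
    refine h2.trans ?_
    rw [div_mul_eq_mul_div, div_le_div_iff₀ hpos two_pos]
    nlinarith
  obtain ⟨hca, hcb⟩ := abs_le.mp hc
  rcases le_abs.mp h3 with h | h
  · rw [le_abs]; right; linarith
  · rw [le_abs]; left; linarith
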